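/- Let r ≥ 3, s > r, and let (V, R) be a finite K^r_s-free r-uniform hypergraph. Let χ : V → Fin (r−1) be any coloring, and let Σ be the set of (r−1)-element subsets of V on which χ is injective. Form the r-uniform hypergraph (V ∪ {v*}, R') where v* ∉ V and R' = R ∪ {σ ∪ {v*} : σ ∈ Σ}. Then (V ∪ {v*}, R') is K^r_s-free. -/
import Mathlib


/-- Adding a new vertex `v*` (here `none`) to a `K^r_s`-free `r`-graph, with new edges
`σ ∪ {v*}` exactly for the `(r-1)`-sets `σ` split by a coloring `χ : V → Fin (r-1)`,
yields a `K^r_s`-free `r`-graph. -/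
theorem one_point_extension_free {V : Type*} [DecidableEq V] (r s : ℕ) (hr : 3 ≤ r) (hs : r < s)
    (R : Finset V → Prop) (hRcard : ∀ σ, R σ → σ.card = r)
    (hfree : ∀ A : Finset V, A.card = s → ∃ σ ⊆ A, σ.card = r ∧ ¬ R σ)
    (χ : V → Fin (r - 1))
    (R' : Finset (Option V) → Prop)
    (hR' : ∀ τ : Finset (Option V), R' τ ↔
      ((∃ σ : Finset V, τ = σ.image some ∧ R σ) ∨
        (∃ σ : Finset V, σ.card = r - 1 ∧ Set.InjOn χ ↑σ ∧ τ = insert none (σ.image some)))) :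
    ∀ A : Finset (Option V), A.card = s → ∃ τ ⊆ A, τ.card = r ∧ ¬ R' τ := by
  classical
  intro A hA
  set B : Finset V := A.filterMap id (fun a a' b h h' => by
    cases a <;> cases a' <;> simp_all) with hB
  have hmem : ∀ x : V, x ∈ B ↔ some x ∈ A := by
    intro x
    simp [hB, Finset.mem_filterMap, Option.mem_def]
  have himg : B.image some = A.erase none := by
    ext o
    cases o with
    | none => simp
    | some x => simp [hmem]
  have hnone : ∀ (σ : Finset V), none ∉ σ.image some := by
    intro σ h
    simp at h
  by_cases h0 : none ∈ A
  · -- B has card s - 1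
    have hBcard : B.card = s - 1 := by
      have := Finset.card_image_of_injective B (Option.some_injective V)
      rw [himg, Finset.card_erase_of_mem h0, hA] at this
      omega
    -- pigeonhole: two vertices with the same color
    obtain ⟨x, hx, y, hy, hxy, hcxy⟩ :
        ∃ x ∈ B, ∃ y ∈ B, x ≠ y ∧ χ x = χ y := by
      apply Finset.exists_ne_map_eq_of_card_lt_of_maps_to (t := (Finset.univ : Finset (Fin (r-1))))
      · simp [hBcard]; omega
      · intro a _; exact Finset.mem_univ _
    have hpair : ({x, y} : Finset V) ⊆ B := by
      intro z hz; simp at hz; rcases hz with h | h <;> subst h <;> assumption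
    obtain ⟨σ, hpσ, hσB, hσcard⟩ :
        ∃ σ, ({x, y} : Finset V) ⊆ σ ∧ σ ⊆ B ∧ σ.card = r - 1 := by
      apply Finset.exists_subsuperset_card_eq hpair
      · rw [Finset.card_pair hxy]; omega
      · omega
    refine ⟨insert none (σ.image some), ?_, ?_, ?_⟩
    · intro o ho
      rcases Finset.mem_insert.mp ho with h | h
      · subst h; exact h0
      · exact (Finset.erase_subset _ _) (himg ▸ Finset.image_subset_image hσB h)
    · rw [Finset.card_insert_of_notMem (hnone σ),
        Finset.card_image_of_injective σ (Option.some_injective V), hσcard]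
      omega
    · rw [hR']
      rintro (⟨σ', heq, hRσ'⟩ | ⟨σ', hc', hinj, heq⟩)
      · exact hnone σ' (heq ▸ Finset.mem_insert_self _ _)
      · have : σ.image some = σ'.image some := by
          have := congrArg (Finset.erase · none) heq
          simpa [Finset.erase_insert (hnone σ), Finset.erase_insert (hnone σ')] using this
        have hσσ' : σ = σ' :=
          Finset.image_injective (Option.some_injective V) this
        subst hσσ'
        exact hxy (hinj (hpσ (by simp)) (hpσ (by simp)) hcxy)
  · -- none ∉ A
    have himg' : B.image some = A := by rw [himg, Finset.erase_eq_of_notMem h0]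
    have hBcard : B.card = s := by
      have := Finset.card_image_of_injective B (Option.some_injective V)
      rw [himg', hA] at this; omega
    obtain ⟨σ, hσB, hσcard, hσR⟩ := hfree B hBcard
    refine ⟨σ.image some, himg' ▸ Finset.image_subset_image hσB, ?_, ?_⟩
    · rw [Finset.card_image_of_injective σ (Option.some_injective V), hσcard]
    · rw [hR']
      rintro (⟨σ', heq, hRσ'⟩ | ⟨σ', hc', hinj, heq⟩)
      · have : σ = σ' := Finset.image_injective (Option.some_injective V) heq
        exact hσR (this ▸ hRσ')
      · exact hnone σ (heq ▸ Finset.mem_insert_self _ _)
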